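/- Let φ_t^{k+t⋆} : FΩ_k → FΩ_{k+t} send each k-subset to the sum of the (k+t)-subsets containing it, and φ_t^{k+t} : FΩ_{k+t} → FΩ_k send each (k+t)-subset to the sum of its k-subsets. Then for Y ∈ Ω_k: Y φ_t^{k+t⋆} φ_t^{k+t} = Σ_{d=0}^{t} C(n−k−d, t−d) Σ_{X ∈ Ω_k, |X △ Y| = 2d} X. -/

import Mathlib

/-- The free module over `R` on the `k`-element subsets of `{1,…,n}` (here `k : ℤ`,
so that the module is zero for `k < 0`). -/
def FOmega (R : Type*) [CommRing R] (n : ℕ) (k : ℤ) : Type _ :=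
  {s : Finset (Fin n) // (s.card : ℤ) = k} →₀ R

noncomputable instance (R : Type*) [CommRing R] (n : ℕ) (k : ℤ) :
    AddCommGroup (FOmega R n k) := Finsupp.instAddCommGroup

noncomputable instance (R : Type*) [CommRing R] (n : ℕ) (k : ℤ) :
    Module R (FOmega R n k) := Finsupp.module _ _

/-- The multistep boundary map `FΩ_a → FΩ_b`, sending a subset `Y` of size `a`
to the sum of all its subsets of size `b` (this is `φ_t^a` with `t = a - b`). -/
noncomputable def phi (R : Type*) [CommRing R] (n : ℕ) (a b : ℤ) :
    FOmega R n a →ₗ[R] FOmega R n b :=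
  Finsupp.lift _ R _ fun Y =>
    ∑ X ∈ (Y.1.powerset.filter fun X => (X.card : ℤ) = b).attach,
      Finsupp.single ⟨X.1, (Finset.mem_filter.mp X.2).2⟩ (1 : R)

/-- The dual multistep map `FΩ_a → FΩ_b` (for `b ≥ a`), sending a subset `Y` of size
`a` to the sum of all subsets of size `b` containing it (this is `φ_t^{b⋆}` with
`t = b - a`). -/
noncomputable def phiStar (R : Type*) [CommRing R] (n : ℕ) (a b : ℤ) :
    FOmega R n a →ₗ[R] FOmega R n b :=
  Finsupp.lift _ R _ fun Y =>
    ∑ Z ∈ Finset.univ.filter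
        (fun Z : {s : Finset (Fin n) // (s.card : ℤ) = b} => Y.1 ⊆ Z.1),
      Finsupp.single Z (1 : R)

open scoped symmDiff

lemma phiStar_single_eq (R : Type*) [CommRing R] (n : ℕ) (a b : ℤ)
    (Y : {s : Finset (Fin n) // (s.card : ℤ) = a}) :
    phiStar R n a b (Finsupp.single Y 1) =
      ∑ Z ∈ Finset.univ.filter
        (fun Z : {s : Finset (Fin n) // (s.card : ℤ) = b} => Y.1 ⊆ Z.1),
      Finsupp.single Z (1 : R) := by
  rw [phiStar]
  erw [Finsupp.lift_apply, Finsupp.sum_single_index (by simp)]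
  rw [one_smul]
  rfl

lemma phi_single_eq (R : Type*) [CommRing R] (n : ℕ) (a b : ℤ)
    (Z : {s : Finset (Fin n) // (s.card : ℤ) = a}) :
    phi R n a b (Finsupp.single Z 1) =
      ∑ X ∈ (Z.1.powerset.filter fun X => (X.card : ℤ) = b).attach,
        Finsupp.single (⟨X.1, (Finset.mem_filter.mp X.2).2⟩ :
          {s : Finset (Fin n) // (s.card : ℤ) = b}) (1 : R) := by
  rw [phi]
  erw [Finsupp.lift_apply, Finsupp.sum_single_index (by simp)]
  rw [one_smul]
  rfl

lemma card_supersets (n m : ℕ) (c : ℤ) (hc : c = m)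
    (U : Finset (Fin n)) (hU : U.card ≤ m) :
    (Finset.univ.filter fun Z : {s : Finset (Fin n) // (s.card : ℤ) = c} => U ⊆ Z.1).card
      = (n - U.card).choose (m - U.card) := by
  subst hc
  have key : (Finset.univ.filter fun Z : {s : Finset (Fin n) // (s.card : ℤ) = (m:ℤ)} => U ⊆ Z.1).card
      = (Uᶜ.powersetCard (m - U.card)).card := by
    apply Finset.card_bij' (fun Z _ => Z.1 \ U)
      (fun W hW => ⟨W ∪ U, by
        rw [Finset.mem_powersetCard] at hW
        have hdis : Disjoint W U := disjoint_compl_left.mono_left hW.1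
        rw [Finset.card_union_of_disjoint hdis, hW.2]
        push_cast; omega⟩)
    case hi =>
      intro Z hZ
      rw [Finset.mem_filter] at hZ
      rw [Finset.mem_powersetCard]
      refine ⟨fun x hx => ?_, ?_⟩
      · simp only [Finset.mem_sdiff] at hx
        simp [hx.2]
      · rw [Finset.card_sdiff_of_subset hZ.2]
        have h2 := Z.2
        have : Z.1.card = m := by exact_mod_cast h2
        omega
    case hj =>
      intro W hW
      rw [Finset.mem_powersetCard] at hW
      simp only [Finset.mem_filter, Finset.mem_univ, true_and]
      exact Finset.subset_union_right
    case left_inv =>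
      intro Z hZ
      rw [Finset.mem_filter] at hZ
      exact Subtype.ext (Finset.sdiff_union_of_subset hZ.2)
    case right_inv =>
      intro W hW
      rw [Finset.mem_powersetCard] at hW
      exact Finset.union_sdiff_cancel_right (disjoint_compl_left.mono_left hW.1)
  rw [key, Finset.card_powersetCard, Finset.card_compl, Fintype.card_fin]

lemma inner_sum_apply (R : Type*) [CommRing R] (n : ℕ) (k t : ℕ)
    (X : {s : Finset (Fin n) // (s.card : ℤ) = (k : ℤ)})
    (Z : {s : Finset (Fin n) // (s.card : ℤ) = (k:ℤ)+t}) :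
    (∑ W ∈ (Z.1.powerset.filter fun W => (W.card : ℤ) = (k:ℤ)).attach,
      Finsupp.single (⟨W.1, (Finset.mem_filter.mp W.2).2⟩ : {s : Finset (Fin n) // (s.card : ℤ) = (k:ℤ)}) (1 : R)) X
      = if X.1 ⊆ Z.1 then 1 else 0 := by
  rw [Finsupp.finset_sum_apply]
  have step1 : (∑ W ∈ (Z.1.powerset.filter fun W => (W.card : ℤ) = (k:ℤ)).attach,
      (Finsupp.single (⟨W.1, (Finset.mem_filter.mp W.2).2⟩ : {s : Finset (Fin n) // (s.card : ℤ) = (k:ℤ)}) (1 : R)) X)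
      = ∑ W ∈ (Z.1.powerset.filter fun W => (W.card : ℤ) = (k:ℤ)).attach,
        (if (W : Finset (Fin n)) = X.1 then (1:R) else 0) := by
    refine Finset.sum_congr rfl fun W _ => ?_
    rw [Finsupp.single_apply]
    exact if_congr (show _ ↔ ((W : Finset (Fin n)) = X.1) from Subtype.ext_iff) rfl rfl
  rw [step1, Finset.sum_attach (Z.1.powerset.filter fun W => (W.card : ℤ) = (k:ℤ))
    (fun w => if w = X.1 then (1:R) else 0),
    Finset.sum_ite_eq' (Z.1.powerset.filter fun W => (W.card : ℤ) = (k:ℤ)) X.1 (fun _ => (1:R))]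
  have hX : X.1.card = k := by exact_mod_cast X.2
  simp [hX]

/-- for a `k`-subset `Y`, applying the dual map `φ_t^{k+t⋆}` and then
`φ_t^{k+t}` gives `∑_{d=0}^{t} C(n-k-d, t-d) ∑_{X : |X △ Y| = 2d} X`. -/
theorem phiStar_phi_apply (R : Type*) [CommRing R] (n : ℕ) (k t : ℕ)
    (hkn : k + t ≤ n)
    (Y : {s : Finset (Fin n) // (s.card : ℤ) = (k : ℤ)}) :
    phi R n ((k : ℤ) + t) k (phiStar R n k ((k : ℤ) + t) (Finsupp.single Y 1)) =
      ∑ d ∈ Finset.range (t + 1), ((n - k - d).choose (t - d) : R) •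
        ∑ X ∈ Finset.univ.filter
            (fun X : {s : Finset (Fin n) // (s.card : ℤ) = (k : ℤ)} =>
              (X.1 ∆ Y.1).card = 2 * d),
          Finsupp.single X (1 : R) := by
  refine Finsupp.ext fun X => ?_
  -- LHS
  rw [phiStar_single_eq]
  erw [map_sum]
  rw [Finset.sum_congr rfl (fun Z _ => phi_single_eq R n ((k:ℤ)+t) k Z)]
  erw [Finsupp.finset_sum_apply]
  rw [Finset.sum_congr rfl (fun Z _ => inner_sum_apply R n k t X Z),
    Finset.sum_boole, Finset.filter_filter]
  -- card facts
  have hXk : X.1.card = k := by exact_mod_cast X.2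
  have hYk : Y.1.card = k := by exact_mod_cast Y.2
  have hck : (X.1 ∩ Y.1).card ≤ k :=
    le_trans (Finset.card_le_card Finset.inter_subset_left) hXk.le
  set d0 := k - (X.1 ∩ Y.1).card with hd0
  have huc : (X.1 ∪ Y.1).card = k + d0 := by
    have := Finset.card_inter_add_card_union X.1 Y.1
    omega
  have hsd : (X.1 ∆ Y.1).card = 2 * d0 := by
    have h1 := Finset.card_sdiff_add_card_inter X.1 Y.1
    have h2 := Finset.card_sdiff_add_card_inter Y.1 X.1
    rw [Finset.inter_comm] at h2
    rw [symmDiff_def, Finset.sup_eq_union,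
      Finset.card_union_of_disjoint (Finset.sdiff_disjoint.mono_right Finset.sdiff_subset)]
    omega
  -- RHS
  rw [Finsupp.finset_sum_apply]
  have rhs1 : ∀ d ∈ Finset.range (t+1),
      (((n - k - d).choose (t - d) : R) • ∑ X' ∈ Finset.univ.filter
          (fun X' : {s : Finset (Fin n) // (s.card : ℤ) = (k : ℤ)} =>
            (X'.1 ∆ Y.1).card = 2 * d), Finsupp.single X' (1 : R)) X
        = if d = d0 then ((n - k - d).choose (t - d) : R) else 0 := by
    intro d _
    rw [Finsupp.smul_apply, Finsupp.finset_sum_apply]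
    have : ∑ X' ∈ Finset.univ.filter
          (fun X' : {s : Finset (Fin n) // (s.card : ℤ) = (k : ℤ)} =>
            (X'.1 ∆ Y.1).card = 2 * d), (Finsupp.single X' (1 : R)) X
        = ∑ X' ∈ Finset.univ.filter
          (fun X' : {s : Finset (Fin n) // (s.card : ℤ) = (k : ℤ)} =>
            (X'.1 ∆ Y.1).card = 2 * d), (if X' = X then (1:R) else 0) :=
      Finset.sum_congr rfl fun X' _ => Finsupp.single_apply
    rw [this, Finset.sum_ite_eq' _ X (fun _ => (1:R))]
    simp only [Finset.mem_filter, Finset.mem_univ, true_and]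
    by_cases hd : d = d0
    · subst hd
      simp [hsd, smul_eq_mul]
    · have : ¬ ((X.1 ∆ Y.1).card = 2 * d) := by omega
      simp [this, hd]
  rw [Finset.sum_congr rfl rhs1, Finset.sum_ite_eq' (Finset.range (t+1)) d0
    (fun d => ((n - k - d).choose (t - d) : R))]
  simp only [Finset.mem_range]
  by_cases hdt : d0 < t + 1
  · rw [if_pos hdt]
    have hfc : (Finset.univ.filter
        (fun Z : {s : Finset (Fin n) // (s.card : ℤ) = (k:ℤ)+t} => Y.1 ⊆ Z.1 ∧ X.1 ⊆ Z.1))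
        = (Finset.univ.filter
        (fun Z : {s : Finset (Fin n) // (s.card : ℤ) = (k:ℤ)+t} => X.1 ∪ Y.1 ⊆ Z.1)) := by
      apply Finset.filter_congr
      intro Z _
      simp [Finset.union_subset_iff, and_comm]
    rw [hfc, card_supersets n (k+t) ((k:ℤ)+t) (by push_cast; ring) _ (by omega : (X.1 ∪ Y.1).card ≤ k + t)]
    rw [huc]
    congr 2 <;> omega
  · rw [if_neg hdt]
    have : (Finset.univ.filter
        (fun Z : {s : Finset (Fin n) // (s.card : ℤ) = (k:ℤ)+t} => Y.1 ⊆ Z.1 ∧ X.1 ⊆ Z.1)) = ∅ := by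
      rw [Finset.filter_eq_empty_iff]
      rintro Z - ⟨hYZ, hXZ⟩
      have hZc : Z.1.card = k + t := by exact_mod_cast Z.2
      have : (X.1 ∪ Y.1).card ≤ Z.1.card :=
        Finset.card_le_card (Finset.union_subset hXZ hYZ)
      omega
    rw [this]
    simp
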